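/- Let f, g : 2^E → ℤ be submodular, monotone, and nonnegative set functions on a finite set E. Then the matroid M(f+g) induced by the sum f+g (via Edmonds' construction, where I is independent iff |I'| ≤ f(I')+g(I') for all nonempty I' ⊆ I) equals the matroid union M(f) ∨ M(g), i.e., a set I is independent in M(f+g) if and only if I = I₁ ∪ I₂ with I₁ independent in M(f) and I₂ independent in M(g). -/

import Mathlib

/-- Edmonds' independence condition for a set function `f`: `I` is independent
iff `|I'| ≤ f I'` for every nonempty `I' ⊆ I`. -/
def EdmondsIndep {α : Type*} (f : Finset α → ℤ) (I : Finset α) : Prop :=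
  ∀ I' ⊆ I, I'.Nonempty → (I'.card : ℤ) ≤ f I'

section EdmondsUnionAux


open Finset

variable {E : Type*} [DecidableEq E]

/-- Axiom package for integer matroid rank functions. -/
structure IsRk (r : Finset E → ℤ) : Prop where
  protected empty : r ∅ = 0
  protected mono : ∀ ⦃S T : Finset E⦄, S ⊆ T → r S ≤ r T
  protected submod : ∀ S T : Finset E, r (S ∪ T) + r (S ∩ T) ≤ r S + r T
  protected unit : ∀ (S : Finset E) (x : E), r (insert x S) ≤ r S + 1

namespace IsRk

variable {r : Finset E → ℤ}

lemma nonneg (h : IsRk r) (S : Finset E) : 0 ≤ r S := by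
  have := h.mono (Finset.empty_subset S)
  rw [h.empty] at this
  exact this

lemma le_card (h : IsRk r) (S : Finset E) : r S ≤ S.card := by
  classical
  induction S using Finset.induction with
  | empty => simp [h.empty]
  | insert _ _ hx ih =>
    rename_i x S
    have h1 := h.unit S x
    have h2 : (insert x S).card = S.card + 1 := Finset.card_insert_of_notMem hx
    rw [h2]
    push_cast
    linarith

lemma contract (h : IsRk r) (C : Finset E) : IsRk (fun S => r (S ∪ C) - r C) where
  empty := by simp
  mono := by
    intro S T hST
    have := h.mono (Finset.union_subset_union hST (Finset.Subset.refl C))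
    simpa using by linarith
  submod := by
    intro S T
    have e1 : (S ∪ C) ∪ (T ∪ C) = (S ∪ T) ∪ C := by ext a; simp [Finset.mem_union]; tauto
    have e2 : (S ∪ C) ∩ (T ∪ C) = (S ∩ T) ∪ C := by
      ext a; simp [Finset.mem_union, Finset.mem_inter]; tauto
    have := h.submod (S ∪ C) (T ∪ C)
    rw [e1, e2] at this
    linarith
  unit := by
    intro S x
    have e : insert x S ∪ C = insert x (S ∪ C) := by ext a; simp [Finset.mem_union, or_assoc]
    have := h.unit (S ∪ C) x
    rw [← e] at this
    linarith

/-- If removing any element drops the rank, the set is independent. -/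
lemma eq_card_of_erase_lt (h : IsRk r) :
    ∀ (n : ℕ) (I : Finset E), I.card ≤ n → (∀ x ∈ I, r (I.erase x) < r I) →
      r I = I.card := by
  intro n
  induction n with
  | zero =>
    intro I hI _
    rw [Finset.card_eq_zero.mp (Nat.le_zero.mp hI)]
    simp [h.empty]
  | succ n ih =>
    intro I hI hcol
    rcases I.eq_empty_or_nonempty with rfl | ⟨x, hx⟩
    · simp [h.empty]
    have h1 : ∀ y ∈ I.erase x, r ((I.erase x).erase y) < r (I.erase x) := by
      intro y hy
      have hyI := Finset.mem_of_mem_erase hy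
      have hyx : y ≠ x := Finset.ne_of_mem_erase hy
      by_contra hcon
      have heq : r ((I.erase x).erase y) = r (I.erase x) :=
        le_antisymm (h.mono (Finset.erase_subset _ _)) (not_lt.mp hcon)
      have hu : (I.erase y) ∪ (I.erase x) = I := by
        ext a
        simp only [Finset.mem_union, Finset.mem_erase]
        constructor
        · rintro (⟨_, ha⟩ | ⟨_, ha⟩) <;> exact ha
        · intro ha
          by_cases hay : a = y
          · right; exact ⟨hay ▸ hyx, ha⟩
          · left; exact ⟨hay, ha⟩
      have hi : (I.erase y) ∩ (I.erase x) = (I.erase x).erase y := by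
        ext a
        simp only [Finset.mem_inter, Finset.mem_erase]
        tauto
      have hs := h.submod (I.erase y) (I.erase x)
      rw [hu, hi, heq] at hs
      have hlt := hcol y hyI
      linarith
    have hpos : 0 < I.card := Finset.card_pos.mpr ⟨x, hx⟩
    have hec : (I.erase x).card = I.card - 1 := Finset.card_erase_of_mem hx
    have hcard : (I.erase x).card ≤ n := by omega
    have h2 : r (I.erase x) = (I.erase x).card := ih _ hcard h1
    have h3 : r I ≤ r (I.erase x) + 1 := by
      have := h.unit (I.erase x) x
      rwa [Finset.insert_erase hx] at this
    have h4 := hcol x hx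
    have h5 := h.le_card I
    rw [h2] at h3 h4
    have hcast : ((I.erase x).card : ℤ) = (I.card : ℤ) - 1 := by
      rw [hec]; omega
    omega

end IsRk
lemma finset_union_singleton (S : Finset E) (x : E) : S ∪ {x} = insert x S := by
  rw [Finset.insert_eq, Finset.union_comm]

/-- The induced rank function: `rk f S = min over T ⊆ S of (f T + |S \ T|)`. -/
def rk (f : Finset E → ℤ) (S : Finset E) : ℤ :=
  (S.powerset.image fun T => f T + ((S \ T).card : ℤ)).min'
    ((Finset.powerset_nonempty S).image _)

lemma rk_le (f : Finset E → ℤ) {S T : Finset E} (h : T ⊆ S) :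
    rk f S ≤ f T + ((S \ T).card : ℤ) :=
  Finset.min'_le _ _ (Finset.mem_image_of_mem _ (Finset.mem_powerset.mpr h))

lemma rk_exists (f : Finset E → ℤ) (S : Finset E) :
    ∃ T ⊆ S, rk f S = f T + ((S \ T).card : ℤ) := by
  have hmem := Finset.min'_mem (S.powerset.image fun T => f T + ((S \ T).card : ℤ))
    ((Finset.powerset_nonempty S).image _)
  rcases Finset.mem_image.mp hmem with ⟨T, hT, hval⟩
  exact ⟨T, Finset.mem_powerset.mp hT, hval.symm⟩

/-- Key cardinality inequality for submodularity of `rk`. -/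
lemma card_sdiff_union_inter (X Y A B : Finset E) :
    (((X ∪ Y) \ (A ∪ B)).card : ℤ) + (((X ∩ Y) \ (A ∩ B)).card : ℤ) ≤
      ((X \ A).card : ℤ) + ((Y \ B).card : ℤ) := by
  have h1 : ((X ∪ Y) \ (A ∪ B)) ∪ ((X ∩ Y) \ (A ∩ B)) ⊆ (X \ A) ∪ (Y \ B) := by
    intro a ha
    simp only [Finset.mem_union, Finset.mem_sdiff, Finset.mem_inter] at ha ⊢
    tauto
  have h2 : ((X ∪ Y) \ (A ∪ B)) ∩ ((X ∩ Y) \ (A ∩ B)) ⊆ (X \ A) ∩ (Y \ B) := by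
    intro a ha
    simp only [Finset.mem_union, Finset.mem_sdiff, Finset.mem_inter] at ha ⊢
    tauto
  have key : ((X ∪ Y) \ (A ∪ B)).card + ((X ∩ Y) \ (A ∩ B)).card ≤
      (X \ A).card + (Y \ B).card := by
    calc ((X ∪ Y) \ (A ∪ B)).card + ((X ∩ Y) \ (A ∩ B)).card
        = (((X ∪ Y) \ (A ∪ B)) ∪ ((X ∩ Y) \ (A ∩ B))).card +
          (((X ∪ Y) \ (A ∪ B)) ∩ ((X ∩ Y) \ (A ∩ B))).card :=
          (Finset.card_union_add_card_inter _ _).symm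
      _ ≤ ((X \ A) ∪ (Y \ B)).card + ((X \ A) ∩ (Y \ B)).card :=
          Nat.add_le_add (Finset.card_le_card h1) (Finset.card_le_card h2)
      _ = (X \ A).card + (Y \ B).card := Finset.card_union_add_card_inter _ _
  exact_mod_cast key

lemma isRk_rk (f : Finset E → ℤ) (h0 : f ∅ = 0)
    (hmono : ∀ ⦃S T : Finset E⦄, S ⊆ T → f S ≤ f T)
    (hnonneg : ∀ S : Finset E, 0 ≤ f S)
    (hsub : ∀ S T : Finset E, f (S ∪ T) + f (S ∩ T) ≤ f S + f T) : IsRk (rk f) where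
  empty := by
    have h1 : rk f ∅ ≤ 0 := by simpa [h0] using rk_le f (Finset.Subset.refl ∅)
    have h2 : 0 ≤ rk f ∅ := by
      obtain ⟨T, hT, hval⟩ := rk_exists f ∅
      rw [Finset.subset_empty.mp hT] at hval
      simp [h0] at hval
      omega
    omega
  mono := by
    intro S S' hSS'
    obtain ⟨T', hT', hval⟩ := rk_exists f S'
    have h1 : rk f S ≤ f (T' ∩ S) + ((S \ (T' ∩ S)).card : ℤ) :=
      rk_le f (Finset.inter_subset_right)
    have e : S \ (T' ∩ S) = S \ T' := by
      ext a; simp only [Finset.mem_sdiff, Finset.mem_inter]; tauto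
    have c : (S \ T').card ≤ (S' \ T').card :=
      Finset.card_le_card (Finset.sdiff_subset_sdiff hSS' (Finset.Subset.refl T'))
    have m : f (T' ∩ S) ≤ f T' := hmono Finset.inter_subset_left
    rw [e] at h1
    rw [hval]
    have c' : ((S \ T').card : ℤ) ≤ ((S' \ T').card : ℤ) := by exact_mod_cast c
    linarith
  submod := by
    intro X Y
    obtain ⟨A, hA, hvA⟩ := rk_exists f X
    obtain ⟨B, hB, hvB⟩ := rk_exists f Y
    have h1 : rk f (X ∪ Y) ≤ f (A ∪ B) + (((X ∪ Y) \ (A ∪ B)).card : ℤ) :=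
      rk_le f (Finset.union_subset_union hA hB)
    have h2 : rk f (X ∩ Y) ≤ f (A ∩ B) + (((X ∩ Y) \ (A ∩ B)).card : ℤ) :=
      rk_le f (Finset.inter_subset_inter hA hB)
    have h3 := card_sdiff_union_inter X Y A B
    have h4 := hsub A B
    rw [hvA, hvB]
    linarith
  unit := by
    intro S x
    obtain ⟨T, hT, hval⟩ := rk_exists f S
    have h1 : rk f (insert x S) ≤ f T + ((insert x S \ T).card : ℤ) :=
      rk_le f (hT.trans (Finset.subset_insert x S))
    have h2 : (insert x S \ T).card ≤ (S \ T).card + 1 := by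
      have hsub' : insert x S \ T ⊆ insert x (S \ T) := by
        intro a ha
        simp only [Finset.mem_sdiff, Finset.mem_insert] at ha ⊢
        tauto
      calc (insert x S \ T).card ≤ (insert x (S \ T)).card := Finset.card_le_card hsub'
        _ ≤ (S \ T).card + 1 := Finset.card_insert_le _ _
    have h2' : ((insert x S \ T).card : ℤ) ≤ ((S \ T).card : ℤ) + 1 := by exact_mod_cast h2
    rw [hval]
    linarith
theorem exists_partition : ∀ (n : ℕ) (r₁ r₂ : Finset E → ℤ), IsRk r₁ → IsRk r₂ →
    ∀ I : Finset E, I.card ≤ n → (∀ S ⊆ I, (S.card : ℤ) ≤ r₁ S + r₂ S) →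
    ∃ I₁ I₂ : Finset E, I₁ ∪ I₂ = I ∧ Disjoint I₁ I₂ ∧
      r₁ I₁ = I₁.card ∧ r₂ I₂ = I₂.card := by
  intro n
  induction n with
  | zero =>
    intro r₁ r₂ h₁ h₂ I hI _
    rw [Finset.card_eq_zero.mp (Nat.le_zero.mp hI)]
    exact ⟨∅, ∅, by simp, by simp, by simp [h₁.empty], by simp [h₂.empty]⟩
  | succ n ih =>
    intro r₁ r₂ h₁ h₂ I hI hcond
    rcases I.eq_empty_or_nonempty with rfl | hne
    · exact ⟨∅, ∅, by simp, by simp, by simp [h₁.empty], by simp [h₂.empty]⟩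
    by_cases hA : ∃ T ⊆ I, T.Nonempty ∧ T ≠ I ∧ r₁ T + r₂ T ≤ (T.card : ℤ)
    · -- Case A: a proper nonempty tight set T exists
      obtain ⟨T, hTI, hTne, hTprop, hTle⟩ := hA
      have hTtight : (T.card : ℤ) = r₁ T + r₂ T := le_antisymm (hcond T hTI) hTle
      have hTlt : T.card < I.card := Finset.card_lt_card (hTI.ssubset_of_ne hTprop)
      have hTcard : T.card ≤ n := by omega
      obtain ⟨T₁, T₂, hTu, hTd, hT1, hT2⟩ :=
        ih r₁ r₂ h₁ h₂ T hTcard (fun S hS => hcond S (hS.trans hTI))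
      have hTposn : 0 < T.card := Finset.card_pos.mpr hTne
      have hITc : (I \ T).card ≤ n := by
        have := Finset.card_sdiff_of_subset hTI
        omega
      have hcond' : ∀ S ⊆ I \ T, (S.card : ℤ) ≤
          (r₁ (S ∪ T) - r₁ T) + (r₂ (S ∪ T) - r₂ T) := by
        intro S hS
        have hSsub : S ⊆ I := hS.trans (Finset.sdiff_subset)
        have hSI : S ∪ T ⊆ I := Finset.union_subset hSsub hTI
        have hdisj : Disjoint S T := Finset.disjoint_of_subset_left hS Finset.sdiff_disjoint
        have hc := hcond (S ∪ T) hSI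
        have hcard : (S ∪ T).card = S.card + T.card := Finset.card_union_of_disjoint hdisj
        rw [hcard] at hc
        push_cast at hc
        linarith
      obtain ⟨S₁, S₂, hSu, hSd, hS1, hS2⟩ :=
        ih (fun S => r₁ (S ∪ T) - r₁ T) (fun S => r₂ (S ∪ T) - r₂ T)
          (h₁.contract T) (h₂.contract T) (I \ T) hITc hcond'
      -- basic subset facts
      have hS1sub : S₁ ⊆ I \ T := hSu ▸ Finset.subset_union_left
      have hS2sub : S₂ ⊆ I \ T := hSu ▸ Finset.subset_union_right
      have hT1sub : T₁ ⊆ T := hTu ▸ Finset.subset_union_left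
      have hT2sub : T₂ ⊆ T := hTu ▸ Finset.subset_union_right
      -- ranks of T₁, T₂ equal ranks of T
      have hcardT : T₁.card + T₂.card = T.card := by
        rw [← hTu]; exact (Finset.card_union_of_disjoint hTd).symm
      have hr1T : r₁ T₁ = r₁ T := by
        have m1 : r₁ T₁ ≤ r₁ T := h₁.mono hT1sub
        have m2 : r₂ T₂ ≤ r₂ T := h₂.mono hT2sub
        have : (T₁.card : ℤ) + (T₂.card : ℤ) = (T.card : ℤ) := by exact_mod_cast hcardT
        linarith [hT1, hT2, hTtight]
      have hr2T : r₂ T₂ = r₂ T := by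
        have m1 : r₁ T₁ ≤ r₁ T := h₁.mono hT1sub
        have m2 : r₂ T₂ ≤ r₂ T := h₂.mono hT2sub
        have : (T₁.card : ℤ) + (T₂.card : ℤ) = (T.card : ℤ) := by exact_mod_cast hcardT
        linarith [hT1, hT2, hTtight]
      refine ⟨S₁ ∪ T₁, S₂ ∪ T₂, ?_, ?_, ?_, ?_⟩
      · have e : (S₁ ∪ T₁) ∪ (S₂ ∪ T₂) = (S₁ ∪ S₂) ∪ (T₁ ∪ T₂) := by
          ext a; simp only [Finset.mem_union]; tauto
        rw [e, hSu, hTu]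
        exact Finset.sdiff_union_of_subset hTI
      · rw [Finset.disjoint_left]
        intro a ha hb
        rcases Finset.mem_union.mp ha with h | h
        · rcases Finset.mem_union.mp hb with h' | h'
          · exact Finset.disjoint_left.mp hSd h h'
          · exact (Finset.mem_sdiff.mp (hS1sub h)).2 (hT2sub h')
        · rcases Finset.mem_union.mp hb with h' | h'
          · exact (Finset.mem_sdiff.mp (hS2sub h')).2 (hT1sub h)
          · exact Finset.disjoint_left.mp hTd h h'
      · -- r₁ (S₁ ∪ T₁) = card
        have hd : Disjoint S₁ T₁ :=
          Finset.disjoint_of_subset_left hS1sub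
            (Finset.disjoint_of_subset_right hT1sub Finset.sdiff_disjoint)
        have hcT : (S₁ ∪ T₁).card = S₁.card + T₁.card := Finset.card_union_of_disjoint hd
        have e1 : (S₁ ∪ T₁) ∪ T = S₁ ∪ T := by
          ext a; simp only [Finset.mem_union]
          constructor
          · rintro ((h | h) | h)
            · exact Or.inl h
            · exact Or.inr (hT1sub h)
            · exact Or.inr h
          · rintro (h | h)
            · exact Or.inl (Or.inl h)
            · exact Or.inr h
        have e2 : (S₁ ∪ T₁) ∩ T = T₁ := by
          ext a
          simp only [Finset.mem_inter, Finset.mem_union]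
          constructor
          · rintro ⟨h | h, ht⟩
            · exact absurd ht (Finset.mem_sdiff.mp (hS1sub h)).2
            · exact h
          · intro h; exact ⟨Or.inr h, hT1sub h⟩
        have hsb := h₁.submod (S₁ ∪ T₁) T
        rw [e1, e2] at hsb
        have hle := h₁.le_card (S₁ ∪ T₁)
        rw [hcT]
        push_cast
        rw [hcT] at hle
        push_cast at hle
        linarith [hS1, hr1T, hT1]
      · -- r₂ (S₂ ∪ T₂) = card, symmetric
        have hd : Disjoint S₂ T₂ :=
          Finset.disjoint_of_subset_left hS2sub
            (Finset.disjoint_of_subset_right hT2sub Finset.sdiff_disjoint)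
        have hcT : (S₂ ∪ T₂).card = S₂.card + T₂.card := Finset.card_union_of_disjoint hd
        have e1 : (S₂ ∪ T₂) ∪ T = S₂ ∪ T := by
          ext a; simp only [Finset.mem_union]
          constructor
          · rintro ((h | h) | h)
            · exact Or.inl h
            · exact Or.inr (hT2sub h)
            · exact Or.inr h
          · rintro (h | h)
            · exact Or.inl (Or.inl h)
            · exact Or.inr h
        have e2 : (S₂ ∪ T₂) ∩ T = T₂ := by
          ext a
          simp only [Finset.mem_inter, Finset.mem_union]
          constructor
          · rintro ⟨h | h, ht⟩
            · exact absurd ht (Finset.mem_sdiff.mp (hS2sub h)).2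
            · exact h
          · intro h; exact ⟨Or.inr h, hT2sub h⟩
        have hsb := h₂.submod (S₂ ∪ T₂) T
        rw [e1, e2] at hsb
        have hle := h₂.le_card (S₂ ∪ T₂)
        rw [hcT]
        push_cast
        rw [hcT] at hle
        push_cast at hle
        linarith [hS2, hr2T, hT2]
    · -- Case B: no proper nonempty tight set
      push_neg at hA
      -- hA : ∀ T ⊆ I, T.Nonempty → T ≠ I → (T.card : ℤ) < r₁ T + r₂ T
      by_cases hB : ∃ x ∈ I, r₁ (I.erase x) = r₁ I
      · obtain ⟨x, hx, hrx⟩ := hB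
        -- need r₂ {x} = 1
        have hIpos : 0 < I.card := Finset.card_pos.mpr hne
        have hr2x : r₂ {x} = 1 := by
          by_cases hcard1 : I.card = 1
          · -- I = {x}; then r₁ I = r₁ ∅ = 0, so condition forces r₂ {x} ≥ 1
            have hIx : I = {x} := by
              rcases Finset.card_eq_one.mp hcard1 with ⟨y, hy⟩
              subst hy
              rw [Finset.mem_singleton.mp hx]
            have her : I.erase x = ∅ := by rw [hIx]; simp
            rw [her, h₁.empty] at hrx
            have hc := hcond I (Finset.Subset.refl I)
            rw [hIx] at hc hrx
            simp only [Finset.card_singleton] at hc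
            push_cast at hc
            have hu : r₂ {x} ≤ 1 := by
              have := h₂.unit ∅ x
              rw [h₂.empty] at this
              simpa using this
            omega
          · have hxprop : ({x} : Finset E) ≠ I := by
              intro h
              rw [← h] at hIpos hcard1
              simp at hcard1
            have hstrict := hA {x} (Finset.singleton_subset_iff.mpr hx)
              (Finset.singleton_nonempty x) hxprop
            simp only [Finset.card_singleton] at hstrict
            have hu1 : r₁ {x} ≤ 1 := by
              have := h₁.unit ∅ x
              rw [h₁.empty] at this
              simpa using this
            have hu2 : r₂ {x} ≤ 1 := by
              have := h₂.unit ∅ x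
              rw [h₂.empty] at this
              simpa using this
            have := h₂.nonneg {x}
            omega
        -- contract x on the r₂ side
        have hec : (I.erase x).card = I.card - 1 := Finset.card_erase_of_mem hx
        have hecn : (I.erase x).card ≤ n := by omega
        have hcond' : ∀ S ⊆ I.erase x, (S.card : ℤ) ≤
            r₁ S + (r₂ (S ∪ {x}) - r₂ {x}) := by
          intro S hS
          rw [hr2x]
          have hSI : S ⊆ I := hS.trans (Finset.erase_subset x I)
          have hxS : x ∉ S := fun hmem => (Finset.mem_erase.mp (hS hmem)).1 rfl
          have hSx : S ∪ {x} ⊆ I := Finset.union_subset hSI (Finset.singleton_subset_iff.mpr hx)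
          have hcardSx : (S ∪ {x}).card = S.card + 1 := by
            rw [finset_union_singleton, Finset.card_insert_of_notMem hxS]
          by_cases hSxI : S ∪ {x} = I
          · -- then S = I.erase x
            have hSe : S = I.erase x := by
              have h1 : S ⊆ I.erase x := hS
              have h2 : I.erase x ⊆ S := by
                intro a ha
                have haI := Finset.mem_of_mem_erase ha
                have hax := Finset.ne_of_mem_erase ha
                rw [← hSxI] at haI
                rcases Finset.mem_union.mp haI with h | h
                · exact h
                · exact absurd (Finset.mem_singleton.mp h) hax
              exact Finset.Subset.antisymm h1 h2
            have hc := hcond I (Finset.Subset.refl I)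
            rw [← hSxI] at hc
            rw [hcardSx] at hc
            push_cast at hc
            have hr1e : r₁ (S ∪ {x}) = r₁ S := by
              rw [hSxI, ← hrx, hSe]
            linarith
          · have hSxne : (S ∪ {x}).Nonempty := ⟨x, Finset.mem_union_right _ (Finset.mem_singleton_self x)⟩
            have hstrict := hA (S ∪ {x}) hSx hSxne hSxI
            rw [hcardSx] at hstrict
            push_cast at hstrict
            have hu : r₁ (S ∪ {x}) ≤ r₁ S + 1 := by
              have := h₁.unit S x
              rw [finset_union_singleton]
              linarith
            linarith
        obtain ⟨J₁, J₂, hJu, hJd, hJ1, hJ2⟩ :=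
          ih r₁ (fun S => r₂ (S ∪ {x}) - r₂ {x}) h₁ (h₂.contract {x})
            (I.erase x) hecn hcond'
        have hJ2sub : J₂ ⊆ I.erase x := hJu ▸ Finset.subset_union_right
        have hJ1sub : J₁ ⊆ I.erase x := hJu ▸ Finset.subset_union_left
        have hxJ2 : x ∉ J₂ := fun hmem => (Finset.mem_erase.mp (hJ2sub hmem)).1 rfl
        have hxJ1 : x ∉ J₁ := fun hmem => (Finset.mem_erase.mp (hJ1sub hmem)).1 rfl
        refine ⟨J₁, J₂ ∪ {x}, ?_, ?_, hJ1, ?_⟩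
        · rw [← Finset.union_assoc, hJu, finset_union_singleton]
          exact Finset.insert_erase hx
        · rw [Finset.disjoint_left]
          intro a ha hb
          rcases Finset.mem_union.mp hb with h | h
          · exact Finset.disjoint_left.mp hJd ha h
          · rw [Finset.mem_singleton.mp h] at ha
            exact hxJ1 ha
        · have hcardJx : (J₂ ∪ {x}).card = J₂.card + 1 := by
            rw [finset_union_singleton, Finset.card_insert_of_notMem hxJ2]
          rw [hcardJx]
          push_cast
          rw [hr2x] at hJ2
          linarith
      · -- every element drops r₁: I is r₁-independent
        push_neg at hB
        have hcol : ∀ x ∈ I, r₁ (I.erase x) < r₁ I := by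
          intro x hx
          exact lt_of_le_of_ne (h₁.mono (Finset.erase_subset x I)) (hB x hx)
        have := h₁.eq_card_of_erase_lt I.card I (le_refl _) hcol
        exact ⟨I, ∅, by simp, by simp, this, by simp [h₂.empty]⟩
/-- Normalize a set function so that it vanishes on `∅`, preserving the axioms. -/
lemma normalize_props (f : Finset E → ℤ)
    (hsub : ∀ S T : Finset E, f (S ∪ T) + f (S ∩ T) ≤ f S + f T)
    (hmono : ∀ ⦃S T : Finset E⦄, S ⊆ T → f S ≤ f T)
    (hnonneg : ∀ S : Finset E, 0 ≤ f S) :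
    (∀ S T : Finset E, (fun S => if S = ∅ then 0 else f S) (S ∪ T) +
        (fun S => if S = ∅ then 0 else f S) (S ∩ T) ≤
        (fun S => if S = ∅ then 0 else f S) S + (fun S => if S = ∅ then 0 else f S) T) ∧
    (∀ ⦃S T : Finset E⦄, S ⊆ T → (fun S => if S = ∅ then 0 else f S) S ≤
        (fun S => if S = ∅ then 0 else f S) T) ∧
    (∀ S : Finset E, 0 ≤ (fun S => if S = ∅ then 0 else f S) S) := by
  refine ⟨?_, ?_, ?_⟩
  · intro S T
    simp only
    by_cases hS : S = ∅
    · subst hS; simp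
    by_cases hT : T = ∅
    · subst hT
      simp only [Finset.union_empty, Finset.inter_empty, if_pos rfl, if_neg hS, add_zero]
      simp
    have hST : S ∪ T ≠ ∅ := by
      intro h
      exact hS (Finset.subset_empty.mp (h ▸ Finset.subset_union_left))
    rw [if_neg hS, if_neg hT, if_neg hST]
    by_cases hI : S ∩ T = ∅
    · rw [if_pos hI]
      have := hsub S T
      have h0 := hnonneg (S ∩ T)
      linarith
    · rw [if_neg hI]
      exact hsub S T
  · intro S T hST
    simp only
    by_cases hS : S = ∅
    · rw [if_pos hS]
      by_cases hT : T = ∅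
      · rw [if_pos hT]
      · rw [if_neg hT]; exact hnonneg T
    · have hT : T ≠ ∅ := by
        intro h
        exact hS (Finset.subset_empty.mp (h ▸ hST))
      rw [if_neg hS, if_neg hT]
      exact hmono hST
  · intro S
    simp only
    by_cases hS : S = ∅
    · rw [if_pos hS]
    · rw [if_neg hS]; exact hnonneg S

end EdmondsUnionAux

/-- for submodular, monotone, nonnegative `f, g`, the matroid `M(f+g)`
equals the matroid union `M(f) ∨ M(g)`: `I` is independent for `f + g` iff
`I = I₁ ∪ I₂` with `I₁` independent for `f` and `I₂` independent for `g`. -/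
theorem edmonds_sum_eq_union {E : Type*} [Fintype E] [DecidableEq E]
    (f g : Finset E → ℤ)
    (hfsub : ∀ S T : Finset E, f (S ∪ T) + f (S ∩ T) ≤ f S + f T)
    (hfmono : ∀ ⦃S T : Finset E⦄, S ⊆ T → f S ≤ f T)
    (hfnonneg : ∀ S : Finset E, 0 ≤ f S)
    (hgsub : ∀ S T : Finset E, g (S ∪ T) + g (S ∩ T) ≤ g S + g T)
    (hgmono : ∀ ⦃S T : Finset E⦄, S ⊆ T → g S ≤ g T)
    (hgnonneg : ∀ S : Finset E, 0 ≤ g S) :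
    ∀ I : Finset E,
      EdmondsIndep (fun S => f S + g S) I ↔
        ∃ I₁ I₂ : Finset E, EdmondsIndep f I₁ ∧ EdmondsIndep g I₂ ∧ I = I₁ ∪ I₂ := by
  intro I
  constructor
  · -- hard direction
    intro hI
    classical
    obtain ⟨hfsub', hfmono', hfnonneg'⟩ := normalize_props f hfsub hfmono hfnonneg
    obtain ⟨hgsub', hgmono', hgnonneg'⟩ := normalize_props g hgsub hgmono hgnonneg
    set f' : Finset E → ℤ := fun S => if S = ∅ then 0 else f S with hf'
    set g' : Finset E → ℤ := fun S => if S = ∅ then 0 else g S with hg'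
    have hf0 : f' ∅ = 0 := by simp [hf']
    have hg0 : g' ∅ = 0 := by simp [hg']
    have hfeq : ∀ S : Finset E, S.Nonempty → f' S = f S := by
      intro S hS; simp [hf', Finset.nonempty_iff_ne_empty.mp hS]
    have hgeq : ∀ S : Finset E, S.Nonempty → g' S = g S := by
      intro S hS; simp [hg', Finset.nonempty_iff_ne_empty.mp hS]
    have hR1 : IsRk (rk f') := isRk_rk f' hf0 hfmono' hfnonneg' hfsub'
    have hR2 : IsRk (rk g') := isRk_rk g' hg0 hgmono' hgnonneg' hgsub'
    have hcond : ∀ S ⊆ I, (S.card : ℤ) ≤ rk f' S + rk g' S := by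
      intro S hSI
      obtain ⟨T, hT, hvT⟩ := rk_exists f' S
      obtain ⟨U, hU, hvU⟩ := rk_exists g' S
      have hsubS : S ⊆ ((S \ T) ∪ (S \ U)) ∪ (T ∩ U) := by
        intro a ha
        simp only [Finset.mem_union, Finset.mem_sdiff, Finset.mem_inter]
        tauto
      have hc : S.card ≤ ((S \ T).card + (S \ U).card) + (T ∩ U).card := by
        calc S.card ≤ (((S \ T) ∪ (S \ U)) ∪ (T ∩ U)).card := Finset.card_le_card hsubS
          _ ≤ ((S \ T) ∪ (S \ U)).card + (T ∩ U).card := Finset.card_union_le _ _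
          _ ≤ ((S \ T).card + (S \ U).card) + (T ∩ U).card := by
              exact Nat.add_le_add_right (Finset.card_union_le _ _) _
      have hkey : ((T ∩ U).card : ℤ) ≤ f' T + g' U := by
        by_cases hTU : T ∩ U = ∅
        · rw [hTU]
          simp only [Finset.card_empty, Nat.cast_zero]
          exact add_nonneg (hfnonneg' T) (hgnonneg' U)
        · have hne : (T ∩ U).Nonempty := Finset.nonempty_iff_ne_empty.mpr hTU
          have hsubI : T ∩ U ⊆ I := (Finset.inter_subset_left.trans hT).trans hSI
          have hind := hI (T ∩ U) hsubI hne
          have hTne : T.Nonempty := hne.mono Finset.inter_subset_left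
          have hUne : U.Nonempty := hne.mono Finset.inter_subset_right
          have m1 : f (T ∩ U) ≤ f T := hfmono Finset.inter_subset_left
          have m2 : g (T ∩ U) ≤ g U := hgmono Finset.inter_subset_right
          rw [hfeq T hTne, hgeq U hUne]
          simp only at hind
          linarith
      rw [hvT, hvU]
      have hc' : (S.card : ℤ) ≤ (((S \ T).card : ℤ) + ((S \ U).card : ℤ)) +
          ((T ∩ U).card : ℤ) := by exact_mod_cast hc
      linarith
    obtain ⟨I₁, I₂, hu, hd, h1, h2⟩ :=
      exists_partition I.card (rk f') (rk g') hR1 hR2 I (le_refl _) hcond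
    refine ⟨I₁, I₂, ?_, ?_, hu.symm⟩
    · intro I' hsub hne'
      have h3 := rk_le f' (show I' ⊆ I₁ from hsub)
      have hcc : (I₁ \ I').card = I₁.card - I'.card := Finset.card_sdiff_of_subset hsub
      have hle := Finset.card_le_card hsub
      have hfe : f' I' = f I' := hfeq I' hne'
      rw [h1, hfe, hcc] at h3
      have : ((I₁.card - I'.card : ℕ) : ℤ) = (I₁.card : ℤ) - (I'.card : ℤ) := by
        omega
      rw [this] at h3
      linarith
    · intro I' hsub hne'
      have h3 := rk_le g' (show I' ⊆ I₂ from hsub)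
      have hcc : (I₂ \ I').card = I₂.card - I'.card := Finset.card_sdiff_of_subset hsub
      have hle := Finset.card_le_card hsub
      have hge : g' I' = g I' := hgeq I' hne'
      rw [h2, hge, hcc] at h3
      have : ((I₂.card - I'.card : ℕ) : ℤ) = (I₂.card : ℤ) - (I'.card : ℤ) := by
        omega
      rw [this] at h3
      linarith
  · -- easy direction
    rintro ⟨I₁, I₂, h1, h2, rfl⟩
    intro I' hsub hne
    have hsplit : I' ⊆ (I' ∩ I₁) ∪ (I' ∩ I₂) := by
      intro a ha
      have := hsub ha
      simp only [Finset.mem_union, Finset.mem_inter] at this ⊢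
      tauto
    have hc : I'.card ≤ (I' ∩ I₁).card + (I' ∩ I₂).card :=
      (Finset.card_le_card hsplit).trans (Finset.card_union_le _ _)
    have hb1 : ((I' ∩ I₁).card : ℤ) ≤ f I' := by
      rcases (I' ∩ I₁).eq_empty_or_nonempty with he | hne1
      · rw [he]; simpa using hfnonneg I'
      · have := h1 (I' ∩ I₁) Finset.inter_subset_right hne1
        have hm : f (I' ∩ I₁) ≤ f I' := hfmono Finset.inter_subset_left
        linarith
    have hb2 : ((I' ∩ I₂).card : ℤ) ≤ g I' := by
      rcases (I' ∩ I₂).eq_empty_or_nonempty with he | hne2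
      · rw [he]; simpa using hgnonneg I'
      · have := h2 (I' ∩ I₂) Finset.inter_subset_right hne2
        have hm : g (I' ∩ I₂) ≤ g I' := hgmono Finset.inter_subset_left
        linarith
    have hc' : (I'.card : ℤ) ≤ ((I' ∩ I₁).card : ℤ) + ((I' ∩ I₂).card : ℤ) := by
      exact_mod_cast hc
    simp only
    linarith
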